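/- arXiv:1608.06189 — 2 statements merged into one kernel-verified Lean document; each statement's English description precedes it below -/
import Mathlib

section
/- Let Σ_e ≻ 0 (p×p), Λ a p×r matrix, Γ a p×r matrix, Ω an r×r symmetric positive definite matrix, and S a p×p symmetric positive definite matrix with Ω + ΓᵀSΓ invertible. Then Λ_new = SΓ(Ω + ΓᵀSΓ)⁻¹ is the unique minimizer over Λ of the function Λ ↦ tr(Σ_e⁻¹ Λ Ω Λᵀ) + tr(Σ_e⁻¹ (I_p - ΛΓᵀ) S (I_p - ΛΓᵀ)ᵀ). -/
open Matrix

lemma trace_tsq_nonneg {n m : ℕ} (N : Matrix (Fin n) (Fin m) ℝ) : 0 ≤ (Nᵀ * N).trace := by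
  classical
  rw [Matrix.trace]
  refine Finset.sum_nonneg fun i _ => ?_
  simp only [Matrix.diag_apply, Matrix.mul_apply, Matrix.transpose_apply]
  exact Finset.sum_nonneg fun j _ => mul_self_nonneg _

lemma trace_tsq_eq_zero {n m : ℕ} (N : Matrix (Fin n) (Fin m) ℝ)
    (h : (Nᵀ * N).trace = 0) : N = 0 := by
  classical
  rw [Matrix.trace] at h
  have h1 := (Finset.sum_eq_zero_iff_of_nonneg (fun i _ => ?_)).mp h
  · ext j i
    have h2 := h1 i (Finset.mem_univ i)
    simp only [Matrix.diag_apply, Matrix.mul_apply, Matrix.transpose_apply] at h2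
    have h3 := (Finset.sum_eq_zero_iff_of_nonneg (fun k _ => mul_self_nonneg (N k i))).mp h2
    have := h3 j (Finset.mem_univ j)
    simpa [mul_self_eq_zero] using this
  · simp only [Matrix.diag_apply, Matrix.mul_apply, Matrix.transpose_apply]
    exact Finset.sum_nonneg fun j _ => mul_self_nonneg _

open scoped MatrixOrder in
lemma key {n m : ℕ} {P : Matrix (Fin n) (Fin n) ℝ} {Q : Matrix (Fin m) (Fin m) ℝ}
    (hP : P.PosDef) (hQ : Q.PosDef) (M : Matrix (Fin n) (Fin m) ℝ) :
    0 ≤ (P * M * Q * Mᵀ).trace ∧ ((P * M * Q * Mᵀ).trace = 0 → M = 0) := by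
  classical
  set B := CFC.sqrt P with hBdef
  set C := CFC.sqrt Q with hCdef
  have hB2 : B * B = P := CFC.sqrt_mul_sqrt_self P hP.posSemidef.nonneg
  have hC2 : C * C = Q := CFC.sqrt_mul_sqrt_self Q hQ.posSemidef.nonneg
  have hBt : Bᵀ = B := by
    have := (CFC.sqrt_nonneg P).posSemidef.1
    rwa [Matrix.IsHermitian, conjTranspose_eq_transpose_of_trivial] at this
  have hCt : Cᵀ = C := by
    have := (CFC.sqrt_nonneg Q).posSemidef.1
    rwa [Matrix.IsHermitian, conjTranspose_eq_transpose_of_trivial] at this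
  have hBu : IsUnit B.det := by
    have : B.det * B.det = P.det := by rw [← Matrix.det_mul, hB2]
    have hPd := hP.det_pos
    refine isUnit_iff_ne_zero.mpr fun h0 => ?_
    rw [h0, mul_zero] at this
    exact hPd.ne (this ▸ rfl)
  have hCu : IsUnit C.det := by
    have : C.det * C.det = Q.det := by rw [← Matrix.det_mul, hC2]
    have hQd := hQ.det_pos
    refine isUnit_iff_ne_zero.mpr fun h0 => ?_
    rw [h0, mul_zero] at this
    exact hQd.ne (this ▸ rfl)
  have e1 : (P * M * Q * Mᵀ).trace = ((B*M*C)ᵀ * (B*M*C)).trace := by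
    have : (B*M*C)ᵀ * (B*M*C) = C * (Mᵀ * (B * (B * (M * C)))) := by
      simp [Matrix.transpose_mul, hBt, hCt, Matrix.mul_assoc]
    rw [this, Matrix.trace_mul_comm C, Matrix.trace_mul_comm _ Mᵀ]
    congr 1
    simp [Matrix.mul_assoc, ← hB2, ← hC2]
  constructor
  · rw [e1]; exact trace_tsq_nonneg _
  · intro h
    rw [e1] at h
    have hN : B * M * C = 0 := trace_tsq_eq_zero _ h
    have : M = B⁻¹ * (B * M * C) * C⁻¹ := by
      rw [Matrix.mul_assoc B M C] at *
      rw [Matrix.nonsing_inv_mul_cancel_left _ _ hBu, Matrix.mul_nonsing_inv_cancel_right _ _ hCu]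
    rw [hN] at this
    simpa using this

lemma herm_transpose {n : ℕ} {M : Matrix (Fin n) (Fin n) ℝ} (h : M.IsHermitian) : Mᵀ = M := by
  rw [← conjTranspose_eq_transpose_of_trivial]; exact h

theorem stmt16 {p r : ℕ} (Se S : Matrix (Fin p) (Fin p) ℝ)
    (Γ : Matrix (Fin p) (Fin r) ℝ) (Ω : Matrix (Fin r) (Fin r) ℝ)
    (hSe : Se.PosDef) (hΩ : Ω.PosDef) (hS : S.PosDef)
    (hinv : IsUnit (Ω + Γᵀ * S * Γ)) :
    (∀ L : Matrix (Fin p) (Fin r) ℝ,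
      (Se⁻¹ * (S * Γ * (Ω + Γᵀ * S * Γ)⁻¹) * Ω * (S * Γ * (Ω + Γᵀ * S * Γ)⁻¹)ᵀ).trace +
          (Se⁻¹ * (1 - S * Γ * (Ω + Γᵀ * S * Γ)⁻¹ * Γᵀ) * S *
            (1 - S * Γ * (Ω + Γᵀ * S * Γ)⁻¹ * Γᵀ)ᵀ).trace ≤
        (Se⁻¹ * L * Ω * Lᵀ).trace + (Se⁻¹ * (1 - L * Γᵀ) * S * (1 - L * Γᵀ)ᵀ).trace) ∧
    (∀ L : Matrix (Fin p) (Fin r) ℝ,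
      (Se⁻¹ * L * Ω * Lᵀ).trace + (Se⁻¹ * (1 - L * Γᵀ) * S * (1 - L * Γᵀ)ᵀ).trace =
        (Se⁻¹ * (S * Γ * (Ω + Γᵀ * S * Γ)⁻¹) * Ω * (S * Γ * (Ω + Γᵀ * S * Γ)⁻¹)ᵀ).trace +
          (Se⁻¹ * (1 - S * Γ * (Ω + Γᵀ * S * Γ)⁻¹ * Γᵀ) * S *
            (1 - S * Γ * (Ω + Γᵀ * S * Γ)⁻¹ * Γᵀ)ᵀ).trace →
      L = S * Γ * (Ω + Γᵀ * S * Γ)⁻¹) := by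
  classical
  set E := Se⁻¹ with hEdef
  set A := Ω + Γᵀ * S * Γ with hAdef
  set Λ := S * Γ * A⁻¹ with hΛdef
  have hE : E.PosDef := hSe.inv
  have hEt : Eᵀ = E := herm_transpose hE.isHermitian
  have hSt : Sᵀ = S := herm_transpose hS.isHermitian
  have hΓH : Γᴴ = Γᵀ := by ext i j; simp [Matrix.conjTranspose_apply]
  have hApd : A.PosDef := by
    rw [hAdef]
    have h1 : (Γᵀ * S * Γ).PosSemidef := by
      have := hS.posSemidef.conjTranspose_mul_mul_same Γ
      rwa [hΓH] at this
    exact hΩ.add_posSemidef h1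
  have hAt : Aᵀ = A := herm_transpose hApd.isHermitian
  have hAdu : IsUnit A.det := (Matrix.isUnit_iff_isUnit_det A).mp hinv
  have hAAi : A * A⁻¹ = 1 := Matrix.mul_nonsing_inv A hAdu
  have hAiA : A⁻¹ * A = 1 := Matrix.nonsing_inv_mul A hAdu
  have hAit : (A⁻¹)ᵀ = A⁻¹ := by rw [Matrix.transpose_nonsing_inv, hAt]
  have hΛt : Λᵀ = A⁻¹ * (Γᵀ * S) := by
    rw [hΛdef]; simp [Matrix.transpose_mul, hAit, hSt, Matrix.mul_assoc]
  have hΛA : Λ * A = S * Γ := by rw [hΛdef, Matrix.mul_assoc, hAiA, Matrix.mul_one]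
  have hAΛt : A * Λᵀ = Γᵀ * S := by rw [hΛt, ← Matrix.mul_assoc, hAAi, Matrix.one_mul]
  have hΛA' : ∀ (X : Matrix (Fin r) (Fin p) ℝ), Λ * (A * X) = S * (Γ * X) := fun X => by
    rw [← Matrix.mul_assoc, hΛA, Matrix.mul_assoc]
  -- expansion of the objective
  have h2 : ∀ X : Matrix (Fin p) (Fin r) ℝ,
      (E * X * Ω * Xᵀ).trace + (E * (1 - X * Γᵀ) * S * (1 - X * Γᵀ)ᵀ).trace =
      (E * (X * (A * Xᵀ))).trace + (E * S).trace - (E * (S * (Γ * Xᵀ))).trace -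
        (E * (X * (Γᵀ * S))).trace := by
    intro X
    have e1 : E * (X * (A * Xᵀ)) = E * X * Ω * Xᵀ + E * (X * (Γᵀ * (S * (Γ * Xᵀ)))) := by
      rw [hAdef]
      simp only [Matrix.mul_add, Matrix.add_mul, Matrix.mul_assoc]
    have e2 : E * (1 - X * Γᵀ) * S * (1 - X * Γᵀ)ᵀ =
        E * S - E * (S * (Γ * Xᵀ)) - E * (X * (Γᵀ * S)) +
          E * (X * (Γᵀ * (S * (Γ * Xᵀ)))) := by
      simp only [Matrix.transpose_sub, Matrix.transpose_mul, Matrix.transpose_one,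
        Matrix.transpose_transpose, Matrix.mul_sub, Matrix.sub_mul, Matrix.mul_one,
        Matrix.one_mul, hSt, Matrix.mul_assoc]
      abel
    rw [e1, e2]
    simp only [Matrix.trace_add, Matrix.trace_sub]
    ring
  -- completion of the square
  have h1 : ∀ L : Matrix (Fin p) (Fin r) ℝ,
      E * (L - Λ) * A * (L - Λ)ᵀ =
      E * (L * (A * Lᵀ)) - E * (L * (Γᵀ * S)) - E * (S * (Γ * Lᵀ)) + E * (Λ * (Γᵀ * S)) := by
    intro L
    have e1 : E * (L - Λ) * A * (L - Λ)ᵀ =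
        E * (L * (A * Lᵀ)) - E * (L * (A * Λᵀ)) - E * (Λ * (A * Lᵀ)) + E * (Λ * (A * Λᵀ)) := by
      simp only [Matrix.transpose_sub, Matrix.mul_sub, Matrix.sub_mul, Matrix.mul_assoc]
      abel
    rw [e1, hAΛt, hΛA' Lᵀ]
  have master : ∀ L : Matrix (Fin p) (Fin r) ℝ,
      (E * L * Ω * Lᵀ).trace + (E * (1 - L * Γᵀ) * S * (1 - L * Γᵀ)ᵀ).trace =
      (E * (L - Λ) * A * (L - Λ)ᵀ).trace +
        ((E * Λ * Ω * Λᵀ).trace + (E * (1 - Λ * Γᵀ) * S * (1 - Λ * Γᵀ)ᵀ).trace) := by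
    intro L
    have t1 := congrArg Matrix.trace (h1 L)
    simp only [Matrix.trace_add, Matrix.trace_sub] at t1
    have tΛ : (E * (Λ * (A * Λᵀ))).trace = (E * (S * (Γ * Λᵀ))).trace := by
      rw [hΛA' Λᵀ]
    rw [h2 L, h2 Λ]
    rw [t1]
    rw [tΛ]
    ring
  constructor
  · intro L
    have hpos := (key hE hApd (L - Λ)).1
    have hm := master L
    linarith
  · intro L hLe
    have hm := master L
    have h0 : (E * (L - Λ) * A * (L - Λ)ᵀ).trace = 0 := by linarith
    have hz := (key hE hApd (L - Λ)).2 h0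
    exact sub_eq_zero.mp hz
end

section
/- Let M be a p×p symmetric positive definite matrix. The unpenalized objective Σ ↦ log det(Σ) + tr(Σ⁻¹M) over symmetric positive definite Σ attains its unique minimum at Σ = M, with minimum value log det(M) + p. -/
open Matrix
open scoped MatrixOrder

private lemma my_conj_posDef {n : ℕ} {A C : Matrix (Fin n) (Fin n) ℝ} (hA : A.PosDef)
    (hC : IsUnit C.det) : (Cᴴ * A * C).PosDef := by
  refine Matrix.PosDef.of_dotProduct_mulVec_pos (Matrix.isHermitian_conjTranspose_mul_mul C hA.1) fun x hx => ?_
  have hCx : C *ᵥ x ≠ 0 := by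
    intro h
    apply hx
    have := congrArg (fun v => C⁻¹ *ᵥ v) h
    simpa [Matrix.mulVec_mulVec, Matrix.nonsing_inv_mul C hC] using this
  have key : star x ⬝ᵥ (Cᴴ * A * C) *ᵥ x = star (C *ᵥ x) ⬝ᵥ A *ᵥ (C *ᵥ x) := by
    simp only [Matrix.star_mulVec, Matrix.dotProduct_mulVec, Matrix.vecMul_vecMul,
      Matrix.mul_assoc]
  rw [key]
  exact hA.dotProduct_mulVec_pos hCx

private lemma my_trace_eq_sum_eigenvalues {n : ℕ} {A : Matrix (Fin n) (Fin n) ℝ}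
    (hA : A.IsHermitian) : A.trace = ∑ i, hA.eigenvalues i := by
  conv_lhs => rw [hA.spectral_theorem]
  rw [Unitary.conjStarAlgAut_apply, Matrix.trace_mul_cycle,
    (Matrix.mem_unitaryGroup_iff').mp (Matrix.IsHermitian.eigenvectorUnitary hA).2, one_mul,
    Matrix.trace_diagonal]
  simp

private lemma my_key {n : ℕ} (B : Matrix (Fin n) (Fin n) ℝ) (hB : B.PosDef) :
    (n : ℝ) ≤ B.trace - Real.log B.det ∧ (B.trace - Real.log B.det = n → B = 1) := by
  have hev : ∀ i, 0 < hB.1.eigenvalues i := hB.eigenvalues_pos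
  have htr : B.trace = ∑ i, hB.1.eigenvalues i := my_trace_eq_sum_eigenvalues hB.1
  have hdet : B.det = ∏ i, hB.1.eigenvalues i := by
    have := hB.1.det_eq_prod_eigenvalues
    simpa using this
  have hlog : Real.log B.det = ∑ i, Real.log (hB.1.eigenvalues i) := by
    rw [hdet, Real.log_prod (fun i _ => (hev i).ne')]
  have hterm : ∀ i, (1 : ℝ) ≤ hB.1.eigenvalues i - Real.log (hB.1.eigenvalues i) := fun i => by
    have := Real.log_le_sub_one_of_pos (hev i)
    linarith
  have hsum : B.trace - Real.log B.det
      = ∑ i, (hB.1.eigenvalues i - Real.log (hB.1.eigenvalues i)) := by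
    rw [htr, hlog, Finset.sum_sub_distrib]
  constructor
  · rw [hsum]
    calc (n : ℝ) = ∑ _i : Fin n, (1 : ℝ) := by simp
    _ ≤ _ := Finset.sum_le_sum fun i _ => hterm i
  · intro heq
    have hall : ∀ i, hB.1.eigenvalues i = 1 := by
      by_contra h
      push_neg at h
      obtain ⟨i, hi⟩ := h
      have hstrict : (1 : ℝ) < hB.1.eigenvalues i - Real.log (hB.1.eigenvalues i) := by
        have := Real.log_lt_sub_one_of_pos (hev i) hi
        linarith
      have : (∑ _j : Fin n, (1 : ℝ))
          < ∑ j, (hB.1.eigenvalues j - Real.log (hB.1.eigenvalues j)) :=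
        Finset.sum_lt_sum (fun j _ => hterm j) ⟨i, Finset.mem_univ i, hstrict⟩
      rw [← hsum, heq] at this
      simp at this
    have hfun : (RCLike.ofReal ∘ hB.1.eigenvalues : Fin n → ℝ) = fun _ => (1 : ℝ) :=
      funext fun i => by simp [hall i]
    have hdiag : Matrix.diagonal (RCLike.ofReal ∘ hB.1.eigenvalues) = (1 : Matrix (Fin n) (Fin n) ℝ) := by
      rw [hfun, Matrix.diagonal_one]
    calc B = _ := hB.1.spectral_theorem
    _ = 1 := by
      rw [hdiag, Unitary.conjStarAlgAut_apply, mul_one,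
        (Matrix.mem_unitaryGroup_iff).mp (Matrix.IsHermitian.eigenvectorUnitary hB.1).2]

theorem stmt18 {p : ℕ} (M : Matrix (Fin p) (Fin p) ℝ) (hM : M.PosDef) :
    (Real.log M.det + (M⁻¹ * M).trace = Real.log M.det + p) ∧
    (∀ S : Matrix (Fin p) (Fin p) ℝ, S.PosDef →
      Real.log M.det + p ≤ Real.log S.det + (S⁻¹ * M).trace) ∧
    (∀ S : Matrix (Fin p) (Fin p) ℝ, S.PosDef →
      Real.log S.det + (S⁻¹ * M).trace = Real.log M.det + p → S = M) := by
  have hMd : IsUnit M.det := isUnit_iff_ne_zero.mpr hM.det_pos.ne'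
  have setup : ∀ S : Matrix (Fin p) (Fin p) ℝ, S.PosDef →
      ∃ B : Matrix (Fin p) (Fin p) ℝ, B.PosDef ∧
        (S⁻¹ * M).trace = B.trace ∧
        Real.log B.det = Real.log M.det - Real.log S.det ∧
        (B = 1 → S = M) := by
    intro S hS
    set R := CFC.sqrt S with hRdef
    have hRR : R * R = S := CFC.sqrt_mul_sqrt_self S hS.posSemidef.nonneg
    have hRherm : R.IsHermitian := (CFC.sqrt_nonneg S).posSemidef.1
    have hRdet : IsUnit R.det := by
      rw [isUnit_iff_ne_zero]
      intro h
      have : S.det = R.det * R.det := by rw [← hRR, Matrix.det_mul]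
      rw [h, mul_zero] at this
      exact hS.det_pos.ne' this
    have hRinvdet : IsUnit (R⁻¹).det := R.isUnit_nonsing_inv_det hRdet
    have hRinvherm : (R⁻¹)ᴴ = R⁻¹ := (hRherm.inv)
    refine ⟨R⁻¹ * M * R⁻¹, ?_, ?_, ?_, ?_⟩
    · have := my_conj_posDef hM hRinvdet
      rwa [hRinvherm] at this
    · have hSinv : S⁻¹ = R⁻¹ * R⁻¹ := by rw [← hRR, Matrix.mul_inv_rev]
      rw [hSinv, Matrix.trace_mul_cycle R⁻¹ M R⁻¹]
    · have hdetB : (R⁻¹ * M * R⁻¹).det = M.det / S.det := by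
        have hSdet : S.det = R.det * R.det := by rw [← hRR, Matrix.det_mul]
        rw [Matrix.det_mul, Matrix.det_mul, Matrix.det_nonsing_inv, Ring.inverse_eq_inv',
          hSdet]
        have : R.det ≠ 0 := hRdet.ne_zero
        field_simp
      rw [hdetB, Real.log_div hM.det_pos.ne' hS.det_pos.ne']
    · intro hB1
      have : R * (R⁻¹ * M * R⁻¹) * R = R * 1 * R := by rw [hB1]
      rw [mul_one, hRR] at this
      rw [← this]
      rw [← mul_assoc, ← mul_assoc, Matrix.mul_nonsing_inv _ hRdet, one_mul,
        mul_assoc, Matrix.nonsing_inv_mul _ hRdet, mul_one]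
  refine ⟨?_, ?_, ?_⟩
  · rw [Matrix.nonsing_inv_mul _ hMd, Matrix.trace_one]
    simp
  · intro S hS
    obtain ⟨B, hB, htr, hlog, _⟩ := setup S hS
    have hkey := (my_key B hB).1
    rw [htr]
    linarith
  · intro S hS heq
    obtain ⟨B, hB, htr, hlog, himp⟩ := setup S hS
    apply himp
    apply (my_key B hB).2
    rw [htr] at heq
    linarith
end
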